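/- With notation as above, if {w₁,…,w_n} is a basis of V₀^{(1,0)} then det(Π_0^1 − φ^{-1}conj(Π_1^0))^{-1} = (−1)^n · (w₁∧…∧w_n ∧ φconj(w₁)∧…∧φconj(w_n)) / (w₁∧…∧w_n ∧ conj(w₁)∧…∧conj(w_n)), computed in Λ^{2n}ℂ^{2n}. Equivalently det(Π_0^1 − φ^{-1}conj(Π_1^0))^{-1} = (−1)^n · det(φ restricted as map V₀^{(0,1)} → V₁^{(0,1)}, expressed via the isomorphism conj(Π_1^0): V₀^{(0,1)} → V₁^{(0,1)}). -/
import Mathlib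


open Matrix MeasureTheory

noncomputable section

/-- Standard complex structure on ℝ^{2n}: J₀ e_{2k} = e_{2k+1}, J₀ e_{2k+1} = -e_{2k}. -/
def J0 (n : ℕ) : Matrix (Fin (2*n)) (Fin (2*n)) ℝ :=
  Matrix.of fun i j =>
    if (i : ℕ) = (j : ℕ) + 1 ∧ (j : ℕ) % 2 = 0 then 1
    else if (j : ℕ) = (i : ℕ) + 1 ∧ (i : ℕ) % 2 = 0 then -1 else 0

/-- Standard symplectic form Ω(u,v) = ⟨J₀ u, v⟩. -/
def Omega (n : ℕ) (u v : Fin (2*n) → ℝ) : ℝ := (J0 n *ᵥ u) ⬝ᵥ v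

/-- A complex structure J compatible with Ω: J² = -Id, Ω is J-invariant,
and ⟨·,·⟩_J := Ω(·, J·) is positive definite. -/
def Compatible (n : ℕ) (J : Matrix (Fin (2*n)) (Fin (2*n)) ℝ) : Prop :=
  J * J = -1 ∧ (∀ u v, Omega n (J *ᵥ u) (J *ᵥ v) = Omega n u v) ∧
    ∀ v : Fin (2*n) → ℝ, v ≠ 0 → 0 < Omega n v (J *ᵥ v)

/-- Complexification of a real matrix. -/
def mc {m : ℕ} (M : Matrix (Fin m) (Fin m) ℝ) : Matrix (Fin m) (Fin m) ℂ :=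
  M.map (fun x => (x : ℂ))

/-- Complexification of a real vector. -/
def vc {m : ℕ} (v : Fin m → ℝ) : Fin m → ℂ := fun i => (v i : ℂ)

/-- Projection P^{(1,0)} = ½(Id - iK) onto the +i eigenspace of K. -/
def P10 {n : ℕ} (K : Matrix (Fin (2*n)) (Fin (2*n)) ℝ) : Matrix (Fin (2*n)) (Fin (2*n)) ℂ :=
  (1/2 : ℂ) • (1 - Complex.I • mc K)

/-- Projection P^{(0,1)} = ½(Id + iK) onto the -i eigenspace of K. -/
def P01 {n : ℕ} (K : Matrix (Fin (2*n)) (Fin (2*n)) ℝ) : Matrix (Fin (2*n)) (Fin (2*n)) ℂ :=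
  (1/2 : ℂ) • (1 + Complex.I • mc K)

/-- `Amat n K J = (½(Id + (-K)·J))⁻¹`; so `Amat n (J0 n) J` is A_t^0 and
`Amat n J (J0 n)` is A_0^t. -/
def Amat (n : ℕ) (K J : Matrix (Fin (2*n)) (Fin (2*n)) ℝ) : Matrix (Fin (2*n)) (Fin (2*n)) ℝ :=
  ((1/2 : ℝ) • (1 + (-K) * J))⁻¹

/-- Π_t^0 = A_t^0 · P₀^{(1,0)}, the projection onto V_t^{(1,0)} with kernel V₀^{(0,1)}. -/
def PiT0 (n : ℕ) (J : Matrix (Fin (2*n)) (Fin (2*n)) ℝ) : Matrix (Fin (2*n)) (Fin (2*n)) ℂ :=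
  mc (Amat n (J0 n) J) * P10 (J0 n)

/-- Π_0^t = A_0^t · P_t^{(1,0)}, the projection onto V₀^{(1,0)} with kernel V_t^{(0,1)}. -/
def Pi0T (n : ℕ) (J : Matrix (Fin (2*n)) (Fin (2*n)) ℝ) : Matrix (Fin (2*n)) (Fin (2*n)) ℂ :=
  mc (Amat n J (J0 n)) * P10 J

/-- Model Bergman kernel 𝒫_J(Z,Z') = exp(-(π/2)⟨(-J₀J)(Z-Z'),Z-Z'⟩ - πiΩ(Z,Z')). -/
def Pker (n : ℕ) (J : Matrix (Fin (2*n)) (Fin (2*n)) ℝ) (Z Z' : Fin (2*n) → ℝ) : ℂ :=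
  Complex.exp (-(Real.pi : ℂ)/2 * Complex.ofReal ((((-(J0 n)) * J) *ᵥ (Z - Z')) ⬝ᵥ (Z - Z'))
    - (Real.pi : ℂ) * Complex.I * Complex.ofReal (Omega n Z Z'))

/-- Closed formula for the composed kernel (𝒫_t𝒫_0)(Z,Z'). -/
def PtP0form (n : ℕ) (J : Matrix (Fin (2*n)) (Fin (2*n)) ℝ) (Z Z' : Fin (2*n) → ℝ) : ℂ :=
  Complex.ofReal (Real.sqrt (Amat n (J0 n) J).det) *
    Complex.exp (-(Real.pi : ℂ) *
      ((Pi0T n J *ᵥ (vc Z - vc Z')) ⬝ᵥ (vc Z - vc Z')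
        + Complex.I * Complex.ofReal (Omega n Z Z')))


lemma mc_mul {m : ℕ} (A B : Matrix (Fin m) (Fin m) ℝ) : mc (A * B) = mc A * mc B := by
  ext i j; simp [mc, Matrix.mul_apply]

lemma mc_one {m : ℕ} : mc (1 : Matrix (Fin m) (Fin m) ℝ) = 1 := by
  ext i j; simp [mc, Matrix.one_apply, apply_ite (fun x : ℝ => (x : ℂ))]

lemma mc_add {m : ℕ} (A B : Matrix (Fin m) (Fin m) ℝ) : mc (A + B) = mc A + mc B := by
  ext i j; simp [mc]

lemma mc_neg {m : ℕ} (A : Matrix (Fin m) (Fin m) ℝ) : mc (-A) = -(mc A) := by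
  ext i j; simp [mc]

lemma mc_smul {m : ℕ} (r : ℝ) (A : Matrix (Fin m) (Fin m) ℝ) : mc (r • A) = (r : ℂ) • mc A := by
  ext i j; simp [mc]

lemma mc_conj {m : ℕ} (A : Matrix (Fin m) (Fin m) ℝ) :
    (mc A).map (starRingEnd ℂ) = mc A := by
  ext i j; simp [mc, Complex.conj_ofReal]

lemma J0_sq (n : ℕ) : J0 n * J0 n = -1 := by
  ext i j
  rw [Matrix.mul_apply]
  rcases Nat.even_or_odd (i : ℕ) with he | ho
  · have hi2 : (i : ℕ) % 2 = 0 := Nat.even_iff.mp he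
    have h1 : (i : ℕ) + 1 < 2 * n := by have := i.isLt; omega
    rw [Finset.sum_eq_single (⟨(i:ℕ)+1, h1⟩ : Fin (2*n))]
    · simp only [J0, Matrix.of_apply, Matrix.neg_apply, Matrix.one_apply, Fin.ext_iff, true_and, and_true,
        Fin.val_mk]
      split_ifs <;> (try norm_num) <;> omega
    · intro k _ hk
      have hk' : (k : ℕ) ≠ (i : ℕ) + 1 := fun h => hk (Fin.ext h)
      simp only [J0, Matrix.of_apply]
      split_ifs <;> (try norm_num) <;> omega
    · intro h; exact absurd (Finset.mem_univ _) h
  · have hi2 : (i : ℕ) % 2 = 1 := Nat.odd_iff.mp ho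
    have h1 : (i : ℕ) - 1 < 2 * n := by have := i.isLt; omega
    have h0 : 0 < (i : ℕ) := by omega
    rw [Finset.sum_eq_single (⟨(i:ℕ)-1, h1⟩ : Fin (2*n))]
    · simp only [J0, Matrix.of_apply, Matrix.neg_apply, Matrix.one_apply, Fin.ext_iff, true_and, and_true,
        Fin.val_mk]
      split_ifs <;> (try norm_num) <;> omega
    · intro k _ hk
      have hk' : (k : ℕ) ≠ (i : ℕ) - 1 := fun h => hk (Fin.ext h)
      simp only [J0, Matrix.of_apply]
      split_ifs <;> (try norm_num) <;> omega
    · intro h; exact absurd (Finset.mem_univ _) h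

lemma keyFalse (n : ℕ) (J : Matrix (Fin (2*n)) (Fin (2*n)) ℝ) (hc : Compatible n J)
    (v : Fin (2*n) → ℝ) (hv : v ≠ 0) (h : J *ᵥ v = -(J0 n *ᵥ v)) : False := by
  have h1 := hc.2.2 v hv
  rw [h] at h1
  have h2 : Omega n v (-(J0 n *ᵥ v)) = -((J0 n *ᵥ v) ⬝ᵥ (J0 n *ᵥ v)) := by
    rw [Omega, dotProduct_neg]
  rw [h2] at h1
  have h3 : (0:ℝ) ≤ (J0 n *ᵥ v) ⬝ᵥ (J0 n *ᵥ v) :=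
    Finset.sum_nonneg fun i _ => mul_self_nonneg _
  linarith

lemma detS_ne (n : ℕ) (J : Matrix (Fin (2*n)) (Fin (2*n)) ℝ) (hc : Compatible n J) :
    ((1/2 : ℝ) • (1 + (-J) * J0 n)).det ≠ 0 := by
  intro hdet
  obtain ⟨v, hv, h0⟩ := Matrix.exists_mulVec_eq_zero_iff.mpr hdet
  have h1 : (1 + (-J) * J0 n) *ᵥ v = 0 := by
    rw [Matrix.smul_mulVec] at h0
    simpa using (smul_eq_zero.mp h0).resolve_left (by norm_num)
  rw [Matrix.add_mulVec, Matrix.one_mulVec, Matrix.neg_mul, Matrix.neg_mulVec] at h1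
  have h2 : v = (J * J0 n) *ᵥ v := add_neg_eq_zero.mp h1
  have h3 : J *ᵥ v = -(J0 n *ᵥ v) := by
    conv_lhs => rw [h2]
    rw [Matrix.mulVec_mulVec, ← Matrix.mul_assoc, hc.1, neg_one_mul, Matrix.neg_mulVec]
  exact keyFalse n J hc v hv h3

lemma neg_one_mulVec {m : ℕ} (x : Fin m → ℝ) : (-1 : Matrix (Fin m) (Fin m) ℝ) *ᵥ x = -x := by
  rw [Matrix.neg_mulVec, Matrix.one_mulVec]

lemma detT_ne (n : ℕ) (J : Matrix (Fin (2*n)) (Fin (2*n)) ℝ) (hc : Compatible n J) :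
    ((1/2 : ℝ) • (1 + (-(J0 n)) * J)).det ≠ 0 := by
  intro hdet
  obtain ⟨v, hv, h0⟩ := Matrix.exists_mulVec_eq_zero_iff.mpr hdet
  have h1 : v + -((J0 n * J) *ᵥ v) = 0 := by
    rw [Matrix.smul_mulVec] at h0
    have := (smul_eq_zero.mp h0).resolve_left (by norm_num)
    rw [Matrix.add_mulVec, Matrix.one_mulVec, Matrix.neg_mul, Matrix.neg_mulVec] at this
    exact this
  have h2 : v = (J0 n * J) *ᵥ v := add_neg_eq_zero.mp h1
  have h3 : J *ᵥ v = -(J0 n *ᵥ v) := by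
    have h4 : J0 n *ᵥ v = J0 n *ᵥ ((J0 n * J) *ᵥ v) := by conv_lhs => rw [h2]
    rw [Matrix.mulVec_mulVec, ← Matrix.mul_assoc, J0_sq n] at h4
    rw [Matrix.neg_mul, Matrix.one_mul, Matrix.neg_mulVec] at h4
    rw [h4, neg_neg]
  exact keyFalse n J hc v hv h3

lemma det_phi_ne (n : ℕ) (φ : Matrix (Fin (2*n)) (Fin (2*n)) ℝ)
    (hsymp : ∀ u v, Omega n (φ *ᵥ u) (φ *ᵥ v) = Omega n u v) : φ.det ≠ 0 := by
  intro hdet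
  obtain ⟨v, hv, h0⟩ := Matrix.exists_mulVec_eq_zero_iff.mpr hdet
  have h1 := hsymp (-(J0 n *ᵥ v)) v
  rw [h0] at h1
  have h2 : Omega n (φ *ᵥ -(J0 n *ᵥ v)) 0 = 0 := by rw [Omega, dotProduct_zero]
  rw [h2] at h1
  have h3 : Omega n (-(J0 n *ᵥ v)) v = v ⬝ᵥ v := by
    rw [Omega, Matrix.mulVec_neg, Matrix.mulVec_mulVec, J0_sq n, neg_one_mulVec, neg_neg]
  rw [h3] at h1
  exact hv (dotProduct_self_eq_zero.mp h1.symm)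

-- mulVec expansions
lemma P10_mulVec {n : ℕ} (K : Matrix (Fin (2*n)) (Fin (2*n)) ℝ) (x : Fin (2*n) → ℂ) :
    P10 K *ᵥ x = (1/2 : ℂ) • (x - Complex.I • (mc K *ᵥ x)) := by
  rw [P10, Matrix.smul_mulVec, Matrix.sub_mulVec, Matrix.one_mulVec,
    Matrix.smul_mulVec]

lemma P01_mulVec {n : ℕ} (K : Matrix (Fin (2*n)) (Fin (2*n)) ℝ) (x : Fin (2*n) → ℂ) :
    P01 K *ᵥ x = (1/2 : ℂ) • (x + Complex.I • (mc K *ᵥ x)) := by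
  rw [P01, Matrix.smul_mulVec, Matrix.add_mulVec, Matrix.one_mulVec,
    Matrix.smul_mulVec]

lemma Shalf_mulVec {m : ℕ} (K J : Matrix (Fin m) (Fin m) ℝ) (x : Fin m → ℂ) :
    mc ((1/2 : ℝ) • (1 + (-K) * J)) *ᵥ x = (1/2 : ℂ) • (x - mc K *ᵥ (mc J *ᵥ x)) := by
  rw [mc_smul, mc_add, mc_one, mc_mul, mc_neg, Matrix.smul_mulVec,
    Matrix.add_mulVec, Matrix.one_mulVec, Matrix.neg_mul, Matrix.neg_mulVec,
    Matrix.mulVec_mulVec]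
  norm_num [sub_eq_add_neg]

lemma P10_conj {n : ℕ} (K : Matrix (Fin (2*n)) (Fin (2*n)) ℝ) :
    (P10 K).map (starRingEnd ℂ) = P01 K := by
  ext i j
  by_cases h : i = j <;>
    simp [P10, P01, mc, h, Matrix.one_apply, Complex.conj_ofReal, map_ofNat,
      Complex.ext_iff] <;> ring

lemma map_conj_PiT0 (n : ℕ) (J : Matrix (Fin (2*n)) (Fin (2*n)) ℝ) :
    (PiT0 n J).map (starRingEnd ℂ) = mc (Amat n (J0 n) J) * P01 (J0 n) := by
  rw [PiT0, Matrix.map_mul, mc_conj, P10_conj]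

lemma Pi0T_fix (n : ℕ) (J : Matrix (Fin (2*n)) (Fin (2*n)) ℝ) (hc : Compatible n J)
    (x : Fin (2*n) → ℂ) (hx : mc (J0 n) *ᵥ x = Complex.I • x) :
    Pi0T n J *ᵥ x = x := by
  have hS : IsUnit ((1/2 : ℝ) • (1 + (-J) * J0 n)).det :=
    isUnit_iff_ne_zero.mpr (detS_ne n J hc)
  have h1 : P10 J *ᵥ x = mc ((1/2 : ℝ) • (1 + (-J) * J0 n)) *ᵥ x := by
    rw [P10_mulVec, Shalf_mulVec, hx, Matrix.mulVec_smul]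
  rw [Pi0T, Amat, ← Matrix.mulVec_mulVec, h1, Matrix.mulVec_mulVec, ← mc_mul,
    Matrix.nonsing_inv_mul _ hS, mc_one, Matrix.one_mulVec]

lemma Pi0T_kill (n : ℕ) (J : Matrix (Fin (2*n)) (Fin (2*n)) ℝ)
    (y : Fin (2*n) → ℂ) (hy : mc J *ᵥ y = (-Complex.I) • y) :
    Pi0T n J *ᵥ y = 0 := by
  have h1 : P10 J *ᵥ y = 0 := by
    rw [P10_mulVec, hy, smul_smul]
    simp [Complex.I_mul_I]
  rw [Pi0T, ← Matrix.mulVec_mulVec, h1, Matrix.mulVec_zero]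

lemma PiT0c_kill (n : ℕ) (J : Matrix (Fin (2*n)) (Fin (2*n)) ℝ)
    (x : Fin (2*n) → ℂ) (hx : mc (J0 n) *ᵥ x = Complex.I • x) :
    (PiT0 n J).map (starRingEnd ℂ) *ᵥ x = 0 := by
  have h1 : P01 (J0 n) *ᵥ x = 0 := by
    rw [P01_mulVec, hx, smul_smul]
    simp [Complex.I_mul_I]
  rw [map_conj_PiT0, ← Matrix.mulVec_mulVec, h1, Matrix.mulVec_zero]

lemma Thalf_mulVec {m : ℕ} (K J : Matrix (Fin m) (Fin m) ℝ) (x : Fin m → ℂ) :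
    mc ((1/2 : ℝ) • (1 + (-K) * J)) *ᵥ x = (1/2 : ℂ) • (x - mc K *ᵥ (mc J *ᵥ x)) :=
  Shalf_mulVec K J x

lemma PiT0c_fix (n : ℕ) (J : Matrix (Fin (2*n)) (Fin (2*n)) ℝ) (hc : Compatible n J)
    (y : Fin (2*n) → ℂ) (hy : mc J *ᵥ y = (-Complex.I) • y) :
    (PiT0 n J).map (starRingEnd ℂ) *ᵥ y = y := by
  have hT : IsUnit ((1/2 : ℝ) • (1 + (-(J0 n)) * J)).det :=
    isUnit_iff_ne_zero.mpr (detT_ne n J hc)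
  have h1 : P01 (J0 n) *ᵥ y = mc ((1/2 : ℝ) • (1 + (-(J0 n)) * J)) *ᵥ y := by
    rw [P01_mulVec, Shalf_mulVec, hy, Matrix.mulVec_smul]
    congr 1
    rw [sub_eq_add_neg, neg_smul, neg_neg]
  rw [map_conj_PiT0, Amat, ← Matrix.mulVec_mulVec, h1, Matrix.mulVec_mulVec, ← mc_mul,
    Matrix.nonsing_inv_mul _ hT, mc_one, Matrix.one_mulVec]


/-- for a basis {w₁,…,w_n} of V₀^{(1,0)},
det(Π_0^1 - φ⁻¹conj(Π_1^0))⁻¹ = (-1)ⁿ · (w₁∧…∧w_n∧φw̄₁∧…∧φw̄_n)/(w₁∧…∧w_n∧w̄₁∧…∧w̄_n),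
the ratio of top wedge products being expressed as a ratio of determinants of the
matrices whose columns are the listed vectors. -/
theorem stmt14 (n : ℕ) (φ : Matrix (Fin (2*n)) (Fin (2*n)) ℝ)
    (hsymp : ∀ u v, Omega n (φ *ᵥ u) (φ *ᵥ v) = Omega n u v)
    (hJ1 : Compatible n (φ * J0 n * φ⁻¹))
    (w : Fin n → (Fin (2*n) → ℂ))
    (hw : ∀ k, mc (J0 n) *ᵥ w k = Complex.I • w k)
    (hli : LinearIndependent ℂ w) :
    (Matrix.of fun (i j : Fin (2*n)) =>
        (if h : (j : ℕ) < n then w ⟨j, h⟩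
          else fun k => (starRingEnd ℂ) (w ⟨(j : ℕ) - n, by have := j.isLt; omega⟩ k)) i).det
      ≠ 0 ∧
    ((Pi0T n (φ * J0 n * φ⁻¹)
        - mc φ⁻¹ * (PiT0 n (φ * J0 n * φ⁻¹)).map (⇑(starRingEnd ℂ))).det)⁻¹
      = (-1 : ℂ)^n *
        (Matrix.of fun (i j : Fin (2*n)) =>
          (if h : (j : ℕ) < n then w ⟨j, h⟩
            else mc φ *ᵥ fun k =>
              (starRingEnd ℂ) (w ⟨(j : ℕ) - n, by have := j.isLt; omega⟩ k)) i).det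
        / (Matrix.of fun (i j : Fin (2*n)) =>
          (if h : (j : ℕ) < n then w ⟨j, h⟩
            else fun k => (starRingEnd ℂ) (w ⟨(j : ℕ) - n, by have := j.isLt; omega⟩ k)) i).det := by
  classical
  set J1 := φ * J0 n * φ⁻¹ with hJ1def
  set cw : Fin n → (Fin (2*n) → ℂ) := fun k i => (starRingEnd ℂ) (w k i) with hcwdef
  set Bm : Matrix (Fin (2*n)) (Fin (2*n)) ℂ := Matrix.of fun (i j : Fin (2*n)) =>
        (if h : (j : ℕ) < n then w ⟨j, h⟩
          else fun k => (starRingEnd ℂ) (w ⟨(j : ℕ) - n, by have := j.isLt; omega⟩ k)) i with hBmdef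
  set Cm : Matrix (Fin (2*n)) (Fin (2*n)) ℂ := Matrix.of fun (i j : Fin (2*n)) =>
          (if h : (j : ℕ) < n then w ⟨j, h⟩
            else mc φ *ᵥ fun k =>
              (starRingEnd ℂ) (w ⟨(j : ℕ) - n, by have := j.isLt; omega⟩ k)) i with hCmdef
  set Mm : Matrix (Fin (2*n)) (Fin (2*n)) ℂ :=
    Pi0T n J1 - mc φ⁻¹ * (PiT0 n J1).map (⇑(starRingEnd ℂ)) with hMmdef
  -- basic facts
  have hφdet : φ.det ≠ 0 := det_phi_ne n φ hsymp
  have hφinv : φ⁻¹ * φ = 1 := Matrix.nonsing_inv_mul φ (isUnit_iff_ne_zero.mpr hφdet)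
  have hcw : ∀ k, mc (J0 n) *ᵥ cw k = (-Complex.I) • cw k := by
    intro k
    funext i
    have h1 : (mc (J0 n) *ᵥ cw k) i = (starRingEnd ℂ) ((mc (J0 n) *ᵥ w k) i) := by
      simp [Matrix.mulVec, dotProduct, mc, map_sum, Complex.conj_ofReal, hcwdef]
    rw [h1, hw k]
    simp [hcwdef, Complex.conj_I]
  have hy : ∀ k, mc J1 *ᵥ (mc φ *ᵥ cw k) = (-Complex.I) • (mc φ *ᵥ cw k) := by
    intro k
    have h1 : J1 * φ = φ * J0 n := by
      rw [hJ1def, Matrix.mul_assoc, hφinv, Matrix.mul_one]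
    rw [Matrix.mulVec_mulVec, ← mc_mul, h1, mc_mul, ← Matrix.mulVec_mulVec, hcw k,
      Matrix.mulVec_smul]
  -- action of Mm on the two families
  have key1 : ∀ x, mc (J0 n) *ᵥ x = Complex.I • x → Mm *ᵥ x = x := by
    intro x hx
    rw [hMmdef, Matrix.sub_mulVec, Pi0T_fix n J1 hJ1 x hx, ← Matrix.mulVec_mulVec,
      PiT0c_kill n J1 x hx, Matrix.mulVec_zero, sub_zero]
  have key2 : ∀ k, Mm *ᵥ (mc φ *ᵥ cw k) = -(cw k) := by
    intro k
    rw [hMmdef, Matrix.sub_mulVec, Pi0T_kill n J1 _ (hy k), ← Matrix.mulVec_mulVec,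
      PiT0c_fix n J1 hJ1 _ (hy k), Matrix.mulVec_mulVec, ← mc_mul, hφinv, mc_one,
      Matrix.one_mulVec, zero_sub]
  -- reindexing equivalence
  set e : Fin n ⊕ Fin n ≃ Fin (2*n) := finSumFinEquiv.trans (finCongr (two_mul n).symm)
    with hedef
  have he1 : ∀ k : Fin n, ((e (Sum.inl k)) : ℕ) = (k : ℕ) := by
    intro k; simp [hedef]
  have he2 : ∀ k : Fin n, ((e (Sum.inr k)) : ℕ) = n + (k : ℕ) := by
    intro k; simp [hedef]; omega
  -- determinant of Bm nonzero
  have hBdet : Bm.det ≠ 0 := by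
    intro hdet
    obtain ⟨v, hv, hBv⟩ := Matrix.exists_mulVec_eq_zero_iff.mpr hdet
    set a : Fin n → ℂ := fun k => v (e (Sum.inl k)) with hadef
    set b : Fin n → ℂ := fun k => v (e (Sum.inr k)) with hbdef
    have hsum : ∀ i, (Bm *ᵥ v) i
        = (∑ k : Fin n, a k • w k) i + (∑ k : Fin n, b k • cw k) i := by
      intro i
      rw [Matrix.mulVec, dotProduct, ← Equiv.sum_comp e (fun j => Bm i j * v j),
        Fintype.sum_sum_type]
      simp only [Finset.sum_apply, Pi.smul_apply, smul_eq_mul]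
      congr 1
      · apply Finset.sum_congr rfl
        intro k _
        have h6 := he1 k
        have hk : ((e (Sum.inl k)) : ℕ) < n := by omega
        rw [hBmdef]
        simp only [Matrix.of_apply]
        rw [dif_pos hk]
        have h7 : (⟨↑(e (Sum.inl k)), hk⟩ : Fin n) = k :=
          Fin.ext (show (↑(e (Sum.inl k)) : ℕ) = (k : ℕ) by omega)
        rw [h7, mul_comm]
      · apply Finset.sum_congr rfl
        intro k _
        have h6 := he2 k
        have hk : ¬ ((e (Sum.inr k)) : ℕ) < n := by omega
        rw [hBmdef]
        simp only [Matrix.of_apply]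
        rw [dif_neg hk]
        have h7 : (⟨↑(e (Sum.inr k)) - n, by omega⟩ : Fin n) = k :=
          Fin.ext (show ((↑(e (Sum.inr k)) : ℕ) - n) = (k : ℕ) by omega)
        rw [h7, mul_comm]
    have huz : (∑ k : Fin n, a k • w k) + (∑ k : Fin n, b k • cw k) = 0 := by
      funext i
      have := congrFun hBv i
      rw [hsum i] at this
      simpa using this
    have hJu : mc (J0 n) *ᵥ (∑ k : Fin n, a k • w k)
        = Complex.I • (∑ k : Fin n, a k • w k) := by
      rw [← Matrix.mulVecLin_apply, map_sum]
      rw [Finset.smul_sum]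
      apply Finset.sum_congr rfl
      intro k _
      rw [_root_.map_smul, Matrix.mulVecLin_apply, hw k, smul_comm]
    have hJz : mc (J0 n) *ᵥ (∑ k : Fin n, b k • cw k)
        = (-Complex.I) • (∑ k : Fin n, b k • cw k) := by
      rw [← Matrix.mulVecLin_apply, map_sum]
      rw [Finset.smul_sum]
      apply Finset.sum_congr rfl
      intro k _
      rw [_root_.map_smul, Matrix.mulVecLin_apply, hcw k, smul_comm]
    have hz : (∑ k : Fin n, b k • cw k) = -(∑ k : Fin n, a k • w k) :=
      eq_neg_of_add_eq_zero_right huz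
    have h2 : mc (J0 n) *ᵥ ((∑ k : Fin n, a k • w k) + (∑ k : Fin n, b k • cw k)) = 0 := by
      rw [huz, Matrix.mulVec_zero]
    rw [Matrix.mulVec_add, hJu, hJz, hz, smul_neg, neg_smul, neg_neg] at h2
    have hu0 : (∑ k : Fin n, a k • w k) = 0 := by
      have h3 : (2 * Complex.I) • (∑ k : Fin n, a k • w k) = 0 := by
        rw [← h2]; module
      have h4 : (2 * Complex.I) ≠ 0 := by simp [Complex.ext_iff]
      exact (smul_eq_zero.mp h3).resolve_left h4
    have ha : ∀ k, a k = 0 := Fintype.linearIndependent_iff.mp hli a hu0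
    have hz0 : (∑ k : Fin n, b k • cw k) = 0 := by rw [hz, hu0, neg_zero]
    have hb : ∀ k, b k = 0 := by
      have hconj : ∑ k : Fin n, (starRingEnd ℂ) (b k) • w k = 0 := by
        funext i
        have h5 := congrArg (starRingEnd ℂ) (congrFun hz0 i)
        simpa [Finset.sum_apply, map_sum, hcwdef, Complex.conj_conj] using h5
      intro k
      have := Fintype.linearIndependent_iff.mp hli (fun k => (starRingEnd ℂ) (b k)) hconj k
      simpa using this
    have hv0 : v = 0 := by
      funext j
      obtain ⟨s, rfl⟩ := e.surjective j
      cases s with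
      | inl k => exact ha k
      | inr k => exact hb k
    exact hv hv0
  refine ⟨hBdet, ?_⟩
  -- M * C = B * D
  set d : Fin (2*n) → ℂ := fun j => if (j : ℕ) < n then 1 else -1 with hddef
  have hMC : Mm * Cm = Bm * Matrix.diagonal d := by
    ext i j
    rw [Matrix.mul_apply, Matrix.mul_diagonal]
    have hcol : ∑ k, Mm i k * Cm k j = (Mm *ᵥ (fun k => Cm k j)) i := rfl
    rw [hcol]
    by_cases hj : (j : ℕ) < n
    · have hc1 : (fun k => Cm k j) = w ⟨j, hj⟩ := by
        funext k
        rw [hCmdef]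
        simp only [Matrix.of_apply]
        rw [dif_pos hj]
      rw [hc1, key1 _ (hw _), hBmdef]
      simp only [Matrix.of_apply]
      rw [dif_pos hj, hddef]
      simp [hj]
    · have hc1 : (fun k => Cm k j) = mc φ *ᵥ cw ⟨(j : ℕ) - n, by have := j.isLt; omega⟩ := by
        funext k
        rw [hCmdef]
        simp only [Matrix.of_apply]
        rw [dif_neg hj]
      rw [hc1, key2 _, hBmdef]
      simp only [Matrix.of_apply]
      rw [dif_neg hj, hddef]
      simp [hj, hcwdef]
  -- determinants
  have hdet : Mm.det * Cm.det = Bm.det * ∏ j, d j := by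
    rw [← Matrix.det_mul, hMC, Matrix.det_mul, Matrix.det_diagonal]
  have hprod : ∏ j : Fin (2*n), d j = (-1 : ℂ)^n := by
    rw [← Equiv.prod_comp e d, Fintype.prod_sum_type]
    have p1 : ∀ k : Fin n, d (e (Sum.inl k)) = 1 := by
      intro k
      have h6 := he1 k
      have hk : ((e (Sum.inl k)) : ℕ) < n := by omega
      simp only [hddef, if_pos hk]
    have p2 : ∀ k : Fin n, d (e (Sum.inr k)) = -1 := by
      intro k
      have h6 := he2 k
      have hk : ¬ ((e (Sum.inr k)) : ℕ) < n := by omega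
      simp only [hddef, if_neg hk]
    rw [Finset.prod_congr rfl (fun k _ => p1 k), Finset.prod_congr rfl (fun k _ => p2 k)]
    simp
  rw [hprod] at hdet
  have hsign : ((-1 : ℂ))^n * ((-1 : ℂ))^n = 1 := by
    rw [← pow_add, ← two_mul, pow_mul]
    norm_num
  have hMdet : Mm.det ≠ 0 := by
    intro h
    rw [h, zero_mul] at hdet
    rcases mul_eq_zero.mp hdet.symm with h' | h'
    · exact hBdet h'
    · exact pow_ne_zero n (by norm_num : (-1:ℂ) ≠ 0) h'
  field_simp
  linear_combination (-((-1:ℂ)^n)) * hdet - Bm.det * hsign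

end
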